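/- Assume Ã ⪰ 0. If Λ is a positive definite block-diagonal matrix and R, R' ∈ SO(p)ⁿ satisfy ΛR' = ÃR (one GPM step written in primal-dual form), then Λ − Ã is not positive definite; more precisely, the largest eigenvalue of Λ^{-1/2}ÃΛ^{-1/2} is at least 1, so λ_min(I − Λ^{-1/2}ÃΛ^{-1/2}) ≤ 0. -/

import Mathlib

open Matrix

/-- The `(i,j)` block of an `np × np` block matrix. -/
def blk {n p : ℕ} (M : Matrix (Fin n × Fin p) (Fin n × Fin p) ℝ) (i j : Fin n) :
    Matrix (Fin p) (Fin p) ℝ := fun a b => M (i, a) (j, b)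

/-- The `i`-th `p × p` block of a stacked `np × p` block column matrix. -/
def blkv {n p : ℕ} (R : Matrix (Fin n × Fin p) (Fin p) ℝ) (i : Fin n) :
    Matrix (Fin p) (Fin p) ℝ := fun a b => R (i, a) b

/-- The square root of a positive semidefinite matrix (Mathlib's former `Matrix.PosSemidef.sqrt`,
removed upstream; restored here with its old definition). -/
noncomputable def Matrix.PosSemidef.sqrt {m : Type*} [Fintype m] [DecidableEq m]
    {M : Matrix m m ℝ} (hM : M.PosSemidef) : Matrix m m ℝ :=
  (hM.1.eigenvectorUnitary : Matrix m m ℝ) * diagonal (Real.sqrt ∘ hM.1.eigenvalues) *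
    (star hM.1.eigenvectorUnitary : Matrix m m ℝ)

lemma Matrix.PosSemidef.sqrt_mul_self {m : Type*} [Fintype m] [DecidableEq m]
    {M : Matrix m m ℝ} (hM : M.PosSemidef) : hM.sqrt * hM.sqrt = M := by
  have hU : (star hM.1.eigenvectorUnitary : Matrix m m ℝ) *
      (hM.1.eigenvectorUnitary : Matrix m m ℝ) = 1 :=
    (Matrix.mem_unitaryGroup_iff').mp hM.1.eigenvectorUnitary.2
  have hspec := hM.1.spectral_theorem
  rw [Unitary.conjStarAlgAut_apply, RCLike.ofReal_real_eq_id, Function.id_comp] at hspec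
  have hd : diagonal (Real.sqrt ∘ hM.1.eigenvalues) * diagonal (Real.sqrt ∘ hM.1.eigenvalues)
      = diagonal hM.1.eigenvalues := by
    rw [diagonal_mul_diagonal]; congr 1; funext i
    simp [Real.mul_self_sqrt (hM.eigenvalues_nonneg i)]
  unfold Matrix.PosSemidef.sqrt
  calc _ = (hM.1.eigenvectorUnitary : Matrix m m ℝ) * (diagonal (Real.sqrt ∘ hM.1.eigenvalues) *
          ((star hM.1.eigenvectorUnitary : Matrix m m ℝ) *
            (hM.1.eigenvectorUnitary : Matrix m m ℝ)) *
          diagonal (Real.sqrt ∘ hM.1.eigenvalues)) *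
          (star hM.1.eigenvectorUnitary : Matrix m m ℝ) := by simp only [Matrix.mul_assoc]
    _ = M := by rw [hU, Matrix.mul_one, hd]; exact hspec.symm

lemma Matrix.PosSemidef.posSemidef_sqrt {m : Type*} [Fintype m] [DecidableEq m]
    {M : Matrix m m ℝ} (hM : M.PosSemidef) : hM.sqrt.PosSemidef := by
  have h := (PosSemidef.diagonal (n := m) (d := Real.sqrt ∘ hM.1.eigenvalues)
    (fun i => Real.sqrt_nonneg _)).mul_mul_conjTranspose_same
      (hM.1.eigenvectorUnitary : Matrix m m ℝ)
  unfold Matrix.PosSemidef.sqrt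
  convert h using 1
  rfl

lemma posdef_conj {m : Type*} [Fintype m] [DecidableEq m] {D P : Matrix m m ℝ}
    (hD : D.PosDef) (hP : IsUnit P) : (P * D * Pᴴ).PosDef := by
  refine PosDef.of_dotProduct_mulVec_pos ?_ ?_
  · have : Dᵀ = D := by have h := hD.1; simp at h; exact h
    simp [Matrix.IsHermitian, conjTranspose_mul, this, mul_assoc]
  · intro x hx
    have hy : Pᴴ *ᵥ x ≠ 0 := by
      intro h
      apply hx
      have hinj : Function.Injective (Pᴴ).mulVec :=
        mulVec_injective_iff_isUnit.mpr ((isUnit_conjTranspose _).mpr hP)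
      have := hinj (a₁ := x) (a₂ := 0) (by simpa using h)
      simpa using this
    have key : star x ⬝ᵥ ((P * D * Pᴴ) *ᵥ x)
        = star (Pᴴ *ᵥ x) ⬝ᵥ (D *ᵥ (Pᴴ *ᵥ x)) := by
      rw [← mulVec_mulVec, ← mulVec_mulVec, star_mulVec, conjTranspose_conjTranspose,
        dotProduct_mulVec]
    rw [key]
    exact hD.dotProduct_mulVec_pos hy

lemma trace_conj_blocks {n p : ℕ} (Λ : Matrix (Fin n × Fin p) (Fin n × Fin p) ℝ)
    (hΛdiag : ∀ i j : Fin n, i ≠ j → blk Λ i j = 0)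
    (Q : Matrix (Fin n × Fin p) (Fin p) ℝ)
    (hQ : ∀ i, blkv Q i * (blkv Q i)ᵀ = 1) :
    trace (Λ * (Q * Qᵀ)) = trace Λ := by
  have hG : ∀ (i : Fin n) (a b : Fin p), (Q * Qᵀ) (i,a) (i,b) = if a = b then 1 else 0 := by
    intro i a b
    have := congrFun (congrFun (hQ i) a) b
    simpa [mul_apply, blkv, one_apply] using this
  have hΛ0 : ∀ (i j : Fin n) (a b : Fin p), i ≠ j → Λ (i,a) (j,b) = 0 := by
    intro i j a b hij
    have := congrFun (congrFun (hΛdiag i j hij) a) b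
    simpa [blk] using this
  have L : trace (Λ * (Q * Qᵀ)) =
      ∑ i : Fin n, ∑ a : Fin p, ∑ j : Fin n, ∑ b : Fin p,
        Λ (i,a) (j,b) * (Q * Qᵀ) (j,b) (i,a) := by
    simp [trace, diag_apply, mul_apply, Fintype.sum_prod_type]
  have Rr : trace Λ = ∑ i : Fin n, ∑ a : Fin p, Λ (i,a) (i,a) := by
    simp [trace, diag_apply, Fintype.sum_prod_type]
  rw [L, Rr]
  refine Finset.sum_congr rfl fun i _ => Finset.sum_congr rfl fun a _ => ?_
  rw [Finset.sum_eq_single i]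
  · simp [hG, mul_ite]
  · intro j _ hji
    exact Finset.sum_eq_zero fun b _ => by simp [hΛ0 i j a b (Ne.symm hji)]
  · simp

theorem stmt6 {n p : ℕ} (hn : 0 < n) (hp : 0 < p)
    (A Λ : Matrix (Fin n × Fin p) (Fin n × Fin p) ℝ)
    (hA : A.PosSemidef) (hΛ : Λ.PosDef)
    (hΛdiag : ∀ i j : Fin n, i ≠ j → blk Λ i j = 0)
    (R R' : Matrix (Fin n × Fin p) (Fin p) ℝ)
    (hR : ∀ i : Fin n, (blkv R i)ᵀ * blkv R i = 1 ∧ (blkv R i).det = 1)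
    (hR' : ∀ i : Fin n, (blkv R' i)ᵀ * blkv R' i = 1 ∧ (blkv R' i).det = 1)
    (hstep : Λ * R' = A * R) :
    ¬ (Λ - A).PosDef ∧
    1 ≤ sSup (spectrum ℝ ((hΛ.posSemidef.sqrt)⁻¹ * A * (hΛ.posSemidef.sqrt)⁻¹)) ∧
    sInf (spectrum ℝ
        ((1 : Matrix (Fin n × Fin p) (Fin n × Fin p) ℝ) -
          (hΛ.posSemidef.sqrt)⁻¹ * A * (hΛ.posSemidef.sqrt)⁻¹)) ≤ 0 := by
  classical
  haveI : Nonempty (Fin p) := ⟨⟨0, hp⟩⟩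
  set S : Matrix (Fin n × Fin p) (Fin n × Fin p) ℝ := hΛ.posSemidef.sqrt with hSdef
  have hSpsd : S.PosSemidef := hΛ.posSemidef.posSemidef_sqrt
  have hSS : S * S = Λ := hΛ.posSemidef.sqrt_mul_self
  have hSd : IsUnit S.det := by
    have hdet : S.det * S.det = Λ.det := by rw [← det_mul, hSS]
    have hpos := hΛ.det_pos
    have : S.det ≠ 0 := by
      intro h; rw [h, mul_zero] at hdet; exact absurd hdet.symm (ne_of_gt hpos)
    exact this.isUnit
  have hSunit : IsUnit S := (Matrix.isUnit_iff_isUnit_det S).mpr hSd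
  have hSinv : S⁻¹ * S = 1 := nonsing_inv_mul S hSd
  have hSinv' : S * S⁻¹ = 1 := mul_nonsing_inv S hSd
  have hST : Sᵀ = S := by have h := hSpsd.1; simp at h; exact h
  have hSinvH : (S⁻¹)ᴴ = S⁻¹ := by
    rw [conjTranspose_eq_transpose_of_trivial, transpose_nonsing_inv, hST]
  set B : Matrix (Fin n × Fin p) (Fin n × Fin p) ℝ := S⁻¹ * A * S⁻¹ with hBdef
  have hBpsd : B.PosSemidef := by
    have h1 : B = (S⁻¹)ᴴ * A * S⁻¹ := by rw [hSinvH]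
    exact h1 ▸ hA.conjTranspose_mul_mul_same S⁻¹
  have hBherm : B.IsHermitian := hBpsd.1
  have hcan : ∀ M : Matrix (Fin n × Fin p) (Fin p) ℝ, S⁻¹ * (S * M) = M := by
    intro M; rw [← Matrix.mul_assoc, hSinv, Matrix.one_mul]
  set x : Matrix (Fin n × Fin p) (Fin p) ℝ := S * R with hxdef
  set y : Matrix (Fin n × Fin p) (Fin p) ℝ := S * R' with hydef
  have hBx : B * x = y := by
    calc B * x = S⁻¹ * (A * (S⁻¹ * (S * R))) := by
          simp only [hBdef, hxdef, Matrix.mul_assoc]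
      _ = S⁻¹ * (A * R) := by rw [hcan]
      _ = S⁻¹ * (Λ * R') := by rw [← hstep]
      _ = S⁻¹ * (S * (S * R')) := by rw [← hSS, Matrix.mul_assoc]
      _ = y := by rw [hcan, hydef]
  -- the trace identity
  have htr : ∀ Q : Matrix (Fin n × Fin p) (Fin p) ℝ,
      (∀ i, (blkv Q i)ᵀ * blkv Q i = 1) →
      trace ((S * Q)ᵀ * (S * Q)) = trace Λ := by
    intro Q hQ
    have hQ' : ∀ i, blkv Q i * (blkv Q i)ᵀ = 1 := fun i =>
      mul_eq_one_comm.mpr (hQ i)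
    have h1 : (S * Q)ᵀ * (S * Q) = Qᵀ * (S * (S * Q)) := by
      rw [transpose_mul, hST, Matrix.mul_assoc]
    rw [h1, trace_mul_comm]
    have h2 : S * (S * Q) * Qᵀ = Λ * (Q * Qᵀ) := by
      rw [← Matrix.mul_assoc, ← Matrix.mul_assoc, hSS, Matrix.mul_assoc]
    rw [h2]
    exact trace_conj_blocks Λ hΛdiag Q hQ'
  have htrx : trace (xᵀ * x) = trace Λ := htr R (fun i => (hR i).1)
  have htry : trace (yᵀ * y) = trace Λ := htr R' (fun i => (hR' i).1)
  have hBT : Bᵀ = B := by have h := hBherm; simp at h; exact h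
  -- zero trace of x^T (1 - B²) x
  have htr0 : trace (xᵀ * ((1 - B * B) * x)) = 0 := by
    have h1 : xᵀ * ((1 - B * B) * x) = xᵀ * x - yᵀ * y := by
      rw [Matrix.sub_mul, Matrix.one_mul, Matrix.mul_sub]
      congr 1
      calc xᵀ * (B * B * x) = (xᵀ * Bᵀ) * (B * x) := by
            rw [hBT]; simp only [Matrix.mul_assoc]
        _ = (B * x)ᵀ * (B * x) := by rw [← transpose_mul]
        _ = yᵀ * y := by rw [hBx]
    rw [h1, trace_sub, htrx, htry, sub_self]
  -- x ≠ 0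
  have hxne : x ≠ 0 := by
    intro h0
    have hR0 : R = 0 := by
      have h2 : R = S⁻¹ * x := (hcan R).symm
      rw [h0, Matrix.mul_zero] at h2
      exact h2
    have := (hR ⟨0, hn⟩).2
    rw [hR0] at this
    have hb : blkv (0 : Matrix (Fin n × Fin p) (Fin p) ℝ) (⟨0, hn⟩ : Fin n) = 0 := by
      ext a b; rfl
    rw [hb, det_zero] at this
    exact zero_ne_one this
  -- main eigenvalue claim
  have hev : ∃ i : Fin n × Fin p, 1 ≤ hBherm.eigenvalues i := by
    by_contra hcon
    push_neg at hcon
    have hnn : ∀ i, 0 ≤ hBherm.eigenvalues i := hBpsd.eigenvalues_nonneg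
    set U : Matrix (Fin n × Fin p) (Fin n × Fin p) ℝ :=
      (hBherm.eigenvectorUnitary : Matrix (Fin n × Fin p) (Fin n × Fin p) ℝ) with hUdef
    have hUU : U * star U = 1 := (Matrix.mem_unitaryGroup_iff).mp hBherm.eigenvectorUnitary.2
    have hU'U : star U * U = 1 := (Matrix.mem_unitaryGroup_iff').mp hBherm.eigenvectorUnitary.2
    set d : (Fin n × Fin p) → ℝ := hBherm.eigenvalues with hddef
    have hspec : B = U * diagonal d * star U := by
      have := hBherm.spectral_theorem
      rwa [RCLike.ofReal_real_eq_id, Function.id_comp] at this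
    have hBB : 1 - B * B = U * diagonal (fun i => 1 - d i * d i) * star U := by
      have h2 : B * B = U * (diagonal d * diagonal d) * star U := by
        rw [hspec]
        calc U * diagonal d * star U * (U * diagonal d * star U)
            = U * diagonal d * (star U * U) * diagonal d * star U := by
              simp only [mul_assoc]
          _ = U * (diagonal d * diagonal d) * star U := by
              rw [hU'U]; simp only [mul_one, mul_assoc]
      have h3 : (1 : Matrix (Fin n × Fin p) (Fin n × Fin p) ℝ) = U * 1 * star U := by
        rw [mul_one, hUU]
      rw [h2]
      nth_rewrite 1 [h3]
      rw [← Matrix.sub_mul, ← Matrix.mul_sub, diagonal_mul_diagonal]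
      congr 2
      rw [← diagonal_one, diagonal_sub]
    have hDpd : (diagonal (fun i => 1 - d i * d i) :
        Matrix (Fin n × Fin p) (Fin n × Fin p) ℝ).PosDef := by
      apply Matrix.PosDef.diagonal
      intro i
      have h1 := hnn i
      have h2 := hcon i
      nlinarith
    have hUunit : IsUnit U := ⟨⟨U, star U, hUU, hU'U⟩, rfl⟩
    have hMpd : (1 - B * B).PosDef := by
      have hstarU : star U = Uᴴ := rfl
      rw [hBB, hstarU]
      exact posdef_conj hDpd hUunit
    -- columns of x
    have hcol : ∀ k : Fin p,
        (xᵀ * ((1 - B * B) * x)).diag k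
          = (fun u => x u k) ⬝ᵥ ((1 - B * B) *ᵥ (fun u => x u k)) := by
      intro k
      simp [diag_apply, mul_apply, mulVec, dotProduct, transpose_apply]
    have hnonneg : ∀ k : Fin p, 0 ≤ (xᵀ * ((1 - B * B) * x)).diag k := by
      intro k
      rw [hcol k]
      have := hMpd.posSemidef.dotProduct_mulVec_nonneg (fun u => x u k)
      have hsv : star (fun u => x u k) = fun u => x u k := by
        ext u; simp
      rwa [hsv] at this
    have hallzero : ∀ k : Fin p, (xᵀ * ((1 - B * B) * x)).diag k = 0 := by
      have hsum : ∑ k : Fin p, (xᵀ * ((1 - B * B) * x)).diag k = 0 := htr0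
      intro k
      exact (Finset.sum_eq_zero_iff_of_nonneg (fun k _ => hnonneg k)).mp hsum k
        (Finset.mem_univ k)
    have hxzero : x = 0 := by
      ext u k
      by_contra huk
      have hvne : (fun u => x u k) ≠ 0 := by
        intro h; exact huk (congrFun h u)
      have := hMpd.dotProduct_mulVec_pos hvne
      have hsv : star (fun u => x u k) = fun u => x u k := by ext u; simp
      rw [hsv, ← hcol k, hallzero k] at this
      exact lt_irrefl 0 this
    exact hxne hxzero
  obtain ⟨i₀, hi₀⟩ := hev
  have hmem : hBherm.eigenvalues i₀ ∈ spectrum ℝ B :=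
    hBherm.eigenvalues_mem_spectrum_real i₀
  set lam : ℝ := hBherm.eigenvalues i₀ with hlamdef
  refine ⟨?_, ?_, ?_⟩
  · -- ¬ (Λ - A).PosDef
    intro hPD
    have h1B : ((1 : Matrix (Fin n × Fin p) (Fin n × Fin p) ℝ) - B).PosDef := by
      have heq : (1 : Matrix (Fin n × Fin p) (Fin n × Fin p) ℝ) - B
          = S⁻¹ * (Λ - A) * (S⁻¹)ᴴ := by
        rw [hSinvH, mul_sub, sub_mul]
        congr 1
        rw [← hSS]
        calc (1 : Matrix (Fin n × Fin p) (Fin n × Fin p) ℝ) = S⁻¹ * S * (S * S⁻¹) := by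
              rw [hSinv, hSinv', one_mul]
          _ = S⁻¹ * (S * S) * S⁻¹ := by simp only [mul_assoc]
      rw [heq]
      exact posdef_conj hPD ((Matrix.isUnit_nonsing_inv_iff).mpr hSunit)
    set v : (Fin n × Fin p) → ℝ := ⇑(hBherm.eigenvectorBasis i₀) with hvdef
    have hvne : v ≠ 0 := by
      intro h
      have := hBherm.eigenvectorBasis.orthonormal.ne_zero i₀
      apply this
      ext u
      exact congrFun h u
    have hpos := h1B.dotProduct_mulVec_pos hvne
    have hsv : star v = v := by ext u; simp
    have hmv : ((1 : Matrix (Fin n × Fin p) (Fin n × Fin p) ℝ) - B) *ᵥ v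
        = v - lam • v := by
      rw [sub_mulVec, one_mulVec, hBherm.mulVec_eigenvectorBasis]
    rw [hsv, hmv] at hpos
    have hdot : v ⬝ᵥ (v - lam • v) = (1 - lam) * (v ⬝ᵥ v) := by
      rw [dotProduct_sub, dotProduct_smul, smul_eq_mul]
      ring
    rw [hdot] at hpos
    have hvv : 0 ≤ v ⬝ᵥ v := by
      apply Finset.sum_nonneg
      intro u _
      exact mul_self_nonneg _
    nlinarith
  · -- sSup
    calc (1 : ℝ) ≤ lam := hi₀
      _ ≤ sSup (spectrum ℝ B) := le_csSup (Matrix.finite_spectrum B).bddAbove hmem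
  · -- sInf
    have hmem' : 1 - lam ∈ spectrum ℝ
        ((1 : Matrix (Fin n × Fin p) (Fin n × Fin p) ℝ) - B) := by
      rw [spectrum.mem_iff] at hmem ⊢
      intro hun
      apply hmem
      have heq : algebraMap ℝ (Matrix (Fin n × Fin p) (Fin n × Fin p) ℝ) (1 - lam)
          - ((1 : Matrix (Fin n × Fin p) (Fin n × Fin p) ℝ) - B)
          = -(algebraMap ℝ (Matrix (Fin n × Fin p) (Fin n × Fin p) ℝ) lam - B) := by
        rw [map_sub, _root_.map_one]
        abel
      rw [heq] at hun
      simpa using hun.neg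
    calc sInf (spectrum ℝ ((1 : Matrix (Fin n × Fin p) (Fin n × Fin p) ℝ) - B))
        ≤ 1 - lam := csInf_le (Matrix.finite_spectrum _).bddBelow hmem'
      _ ≤ 0 := by linarith
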